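/- Let G = (V,E) be a finite connected simple graph, B ⊆ V an independent set with |B| ≥ 2, and Ĝ the graph obtained by adding all edges between pairs of boundary nodes. If Ĝ has a chordless cycle Z of length ≥ 4, then either Z ⊆ E and Z is a cycle of G meeting at most one boundary node with no chord in G, or Z contains exactly one added edge e and Z ∖ {e} is a crossing of (G,B) of length ≥ 3 with no chord. -/

import Mathlib

open SimpleGraph

variable {V : Type}

/-- A *crossing* of `(G, B)` is a minimal path between two distinct boundary nodes,
i.e. a path whose endpoints are distinct boundary nodes and whose interior vertices
are not boundary nodes. -/
def IsCrossing (G : SimpleGraph V) (B : Set V) {a b : V} (p : G.Walk a b) : Prop :=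
  p.IsPath ∧ a ∈ B ∧ b ∈ B ∧ a ≠ b ∧ ∀ v ∈ p.support, v ∈ B → v = a ∨ v = b

/-- The graph `Ĝ` obtained from `G` by adding an edge between every pair of distinct
boundary nodes. -/
def GHat (G : SimpleGraph V) (B : Set V) : SimpleGraph V :=
  G ⊔ SimpleGraph.fromRel (fun a b => a ∈ B ∧ b ∈ B)

/-- A graph is *chordal* if every cycle of length at least 4 has a chord: an edge of the
graph joining two vertices of the cycle that is not an edge of the cycle. -/
def IsChordal (G : SimpleGraph V) : Prop :=
  ∀ (v : V) (p : G.Walk v v), p.IsCycle → 4 ≤ p.length →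
    ∃ a b, G.Adj a b ∧ a ∈ p.support ∧ b ∈ p.support ∧ s(a, b) ∉ p.edges

/-- If a path starts at `u` and contains an edge `s(u, z)`, that edge is its first edge. -/
lemma startEdge' {G : SimpleGraph V} {u v z : V} (q : G.Walk u v) (hq : q.IsPath)
    (hz : s(u, z) ∈ q.edges) : ∃ (h : G.Adj u z) (q' : G.Walk z v), q = Walk.cons h q' := by
  cases q with
  | nil => simp at hz
  | @cons _ w _ h q' =>
    rw [Walk.cons_isPath_iff] at hq
    rw [Walk.edges_cons, List.mem_cons] at hz
    rcases hz with hz | hz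
    · have : z = w := Sym2.congr_right.mp hz
      subst this
      exact ⟨h, q', rfl⟩
    · exact absurd (q'.fst_mem_support_of_mem_edges hz) hq.2

/-- Every vertex of a walk is either its start or lies in one of its edges. -/
lemma mem_support_cases' {G : SimpleGraph V} {u v : V} (p : G.Walk u v) :
    ∀ x ∈ p.support, x = u ∨ ∃ f ∈ p.edges, x ∈ f := by
  induction p with
  | nil => intro x hx; left; simpa using hx
  | @cons a w b h q ih =>
    intro x hx
    rw [Walk.support_cons, List.mem_cons] at hx
    rcases hx with rfl | hx
    · exact Or.inl rfl
    · rcases ih x hx with rfl | ⟨f, hf, hxf⟩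
      · exact Or.inr ⟨s(a, x), by simp, by simp⟩
      · exact Or.inr ⟨f, by simp [hf], hxf⟩

lemma mem_support_of_mem_edge' {G : SimpleGraph V} {u v x : V} {f : Sym2 V} (p : G.Walk u v)
    (hf : f ∈ p.edges) (hx : x ∈ f) : x ∈ p.support := by
  induction f using Sym2.ind with
  | _ y z =>
    rcases Sym2.mem_iff.mp hx with rfl | rfl
    · exact p.fst_mem_support_of_mem_edges hf
    · exact p.snd_mem_support_of_mem_edges hf

/-- A path from `b` to `a` containing the edges `s(b, c)` and `s(a, c)` has length 2. -/
lemma pathTwo' {G : SimpleGraph V} {a b c : V} (q : G.Walk b a) (hq : q.IsPath)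
    (hab : a ≠ b) (hac : a ≠ c) (h1 : s(b, c) ∈ q.edges) (h2 : s(a, c) ∈ q.edges) :
    q.length = 2 := by
  obtain ⟨h, q1, rfl⟩ := startEdge' q hq h1
  rw [Walk.cons_isPath_iff] at hq
  have h2' : s(a, c) ∈ q1.edges := by
    rw [Walk.edges_cons, List.mem_cons] at h2
    rcases h2 with heq | h2'
    · rw [Sym2.eq_iff] at heq; tauto
    · exact h2'
  have h2r : s(a, c) ∈ q1.reverse.edges := by
    rw [Walk.edges_reverse, List.mem_reverse]; exact h2'
  obtain ⟨h', q2, hq2⟩ := startEdge' q1.reverse hq.1.reverse h2r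
  have hq2p : (Walk.cons h' q2).IsPath := hq2 ▸ hq.1.reverse
  rw [Walk.cons_isPath_iff] at hq2p
  have : q2 = Walk.nil := (Walk.isPath_iff_eq_nil (p := q2)).mp hq2p.1
  subst this
  have hl : q1.reverse.length = 1 := by rw [hq2]; simp
  rw [Walk.length_reverse] at hl
  simp [hl]

/-- A cycle at `a` containing the edge `s(a, b)` decomposes into that edge together with a
path from `b` to `a` not using the edge. -/
lemma cycleDecomp' {G : SimpleGraph V} {a b : V} (c : G.Walk a a) (hc : c.IsCycle)
    (hab : s(a, b) ∈ c.edges) :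
    ∃ q : G.Walk b a, q.IsPath ∧ s(a, b) ∉ q.edges ∧
      (∀ f, f ∈ c.edges ↔ f = s(a, b) ∨ f ∈ q.edges) ∧ q.length + 1 = c.length ∧
      (∀ x ∈ q.support, x ∈ c.support) := by
  have hne : a ≠ b := (G.mem_edgeSet.mp (c.edges_subset_edgeSet hab)).ne
  obtain ⟨w, h0, q0, rfl⟩ := Walk.not_nil_iff.mp hc.not_nil
  rw [Walk.cons_isCycle_iff] at hc
  by_cases hwb : w = b
  · subst hwb
    exact ⟨q0, hc.1, hc.2, fun f => by simp, by simp, fun x hx => by simp [hx]⟩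
  · have hab' : s(a, b) ∈ q0.edges := by
      rw [Walk.edges_cons, List.mem_cons] at hab
      rcases hab with heq | h
      · exact absurd (Sym2.congr_right.mp heq).symm hwb
      · exact h
    have habr : s(a, b) ∈ q0.reverse.edges := by
      rw [Walk.edges_reverse, List.mem_reverse]; exact hab'
    obtain ⟨hadj, r, hr⟩ := startEdge' q0.reverse hc.1.reverse habr
    have hrp : (Walk.cons hadj r).IsPath := hr ▸ hc.1.reverse
    rw [Walk.cons_isPath_iff] at hrp
    refine ⟨(Walk.cons h0 r.reverse).reverse, ?_, ?_, ?_, ?_, ?_⟩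
    · rw [Walk.isPath_reverse_iff, Walk.cons_isPath_iff]
      refine ⟨hrp.1.reverse, ?_⟩
      rw [Walk.support_reverse, List.mem_reverse]; exact hrp.2
    · rw [Walk.edges_reverse, List.mem_reverse, Walk.edges_cons, List.mem_cons]
      push_neg
      constructor
      · intro heq; exact hwb (Sym2.congr_right.mp heq).symm
      · rw [Walk.edges_reverse, List.mem_reverse]
        intro hmem
        exact hrp.2 (r.fst_mem_support_of_mem_edges hmem)
    · intro f
      have hq0 : f ∈ q0.edges ↔ f = s(a, b) ∨ f ∈ r.edges := by
        rw [← List.mem_reverse, ← Walk.edges_reverse, hr, Walk.edges_cons, List.mem_cons]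
      simp only [Walk.edges_cons, List.mem_cons, hq0, Walk.edges_reverse, List.mem_reverse]
      tauto
    · have h1 : q0.length = r.length + 1 := by
        rw [← Walk.length_reverse q0, hr, Walk.length_cons]
      simp [h1]
    · intro x hx
      rw [Walk.support_reverse, List.mem_reverse, Walk.support_cons, List.mem_cons] at hx
      rw [Walk.support_cons, List.mem_cons]
      rcases hx with rfl | hx
      · exact Or.inl rfl
      · rw [Walk.support_reverse, List.mem_reverse] at hx
        right
        rw [← List.mem_reverse, ← Walk.support_reverse, hr, Walk.support_cons]
        exact List.mem_cons_of_mem _ hx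

/-- A cycle containing all three edges of a triangle has length 3. -/
lemma triangle' {G : SimpleGraph V} {v a b c : V} (p : G.Walk v v) (hp : p.IsCycle)
    (e1 : s(a, b) ∈ p.edges) (e2 : s(a, c) ∈ p.edges) (e3 : s(b, c) ∈ p.edges) :
    p.length = 3 := by
  classical
  have hab : a ≠ b := (G.mem_edgeSet.mp (p.edges_subset_edgeSet e1)).ne
  have hac : a ≠ c := (G.mem_edgeSet.mp (p.edges_subset_edgeSet e2)).ne
  have hbc : b ≠ c := (G.mem_edgeSet.mp (p.edges_subset_edgeSet e3)).ne
  have ha : a ∈ p.support := p.fst_mem_support_of_mem_edges e1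
  have hmem : ∀ f, f ∈ (p.rotate a ha).edges ↔ f ∈ p.edges :=
    fun f => (p.rotate_edges a ha).mem_iff
  obtain ⟨q, hqp, hqnab, hqiff, hqlen, -⟩ :=
    cycleDecomp' (p.rotate a ha) (hp.rotate ha) ((hmem _).mpr e1)
  have h3 : s(b, c) ∈ q.edges := by
    rcases (hqiff _).mp ((hmem _).mpr e3) with heq | h
    · rw [Sym2.eq_iff] at heq; tauto
    · exact h
  have h2 : s(a, c) ∈ q.edges := by
    rcases (hqiff _).mp ((hmem _).mpr e2) with heq | h
    · exact absurd (Sym2.congr_right.mp heq) hbc.symm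
    · exact h
  have hlen : (p.rotate a ha).length = p.length := by
    have := (p.rotate_edges a ha).perm.length_eq
    rwa [Walk.length_edges, Walk.length_edges] at this
  have h2q : q.length = 2 := pathTwo' q hqp hab hac h3 h2
  omega

/-- Any chordless cycle of `Ĝ` of length ≥ 4 is either a chordless cycle of `G` meeting at
most one boundary node, or consists of exactly one added edge `e` together with a chordless
crossing of `(G, B)` of length ≥ 3. -/
theorem stmt17 [Fintype V] (G : SimpleGraph V) (hconn : G.Connected)
    (B : Set V) (hB : 2 ≤ B.ncard) (hind : ∀ a ∈ B, ∀ b ∈ B, ¬G.Adj a b)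
    (v : V) (p : (GHat G B).Walk v v) (hc : p.IsCycle) (hlen : 4 ≤ p.length)
    (hchordless : ¬∃ a b, (GHat G B).Adj a b ∧ a ∈ p.support ∧ b ∈ p.support ∧
      s(a, b) ∉ p.edges) :
    ((∀ e ∈ p.edges, e ∈ G.edgeSet) ∧
      (∀ x ∈ p.support, x ∈ B → ∀ y ∈ p.support, y ∈ B → x = y) ∧
      ¬∃ a b, G.Adj a b ∧ a ∈ p.support ∧ b ∈ p.support ∧ s(a, b) ∉ p.edges) ∨
    (∃ e ∈ p.edges, e ∉ G.edgeSet ∧ (∀ e' ∈ p.edges, e' ∉ G.edgeSet → e' = e) ∧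
      ∃ (a b : V) (q : G.Walk a b), IsCrossing G B q ∧ 3 ≤ q.length ∧
        (∀ x, x ∈ q.edges ↔ x ∈ p.edges ∧ x ≠ e) ∧
        ¬∃ x y, G.Adj x y ∧ x ∈ q.support ∧ y ∈ q.support ∧ s(x, y) ∉ q.edges) := by
  classical
  by_cases hall : ∀ e ∈ p.edges, e ∈ G.edgeSet
  · left
    refine ⟨hall, ?_, ?_⟩
    · intro x hx hxB y hy hyB
      by_contra hxy
      refine hchordless ⟨x, y, ?_, hx, hy, ?_⟩
      · simp only [GHat, sup_adj, fromRel_adj]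
        exact Or.inr ⟨hxy, Or.inl ⟨hxB, hyB⟩⟩
      · intro hmem
        exact hind x hxB y hyB (G.mem_edgeSet.mp (hall _ hmem))
    · rintro ⟨x, y, hadj, hx, hy, hne⟩
      refine hchordless ⟨x, y, ?_, hx, hy, hne⟩
      simp only [GHat, sup_adj]
      exact Or.inl hadj
  · right
    push_neg at hall
    obtain ⟨e, he, heG⟩ := hall
    revert he heG
    induction e using Sym2.ind with
    | _ a b =>
    intro he heG
    have hGH : (GHat G B).Adj a b := (GHat G B).mem_edgeSet.mp (p.edges_subset_edgeSet he)
    have hnab : a ≠ b := hGH.ne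
    have haB : a ∈ B ∧ b ∈ B := by
      have h := hGH
      simp only [GHat, sup_adj, fromRel_adj] at h
      rcases h with h | ⟨-, h | h⟩
      · exact absurd (G.mem_edgeSet.mpr h) heG
      · exact h
      · exact ⟨h.2, h.1⟩
    have hsupB : ∀ x ∈ p.support, x ∈ B → x = a ∨ x = b := by
      intro x hx hxB
      by_contra hx'
      push_neg at hx'
      have hax : s(a, x) ∈ p.edges := by
        by_contra hcon
        refine hchordless ⟨a, x, ?_, p.fst_mem_support_of_mem_edges he, hx, hcon⟩
        simp only [GHat, sup_adj, fromRel_adj]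
        exact Or.inr ⟨Ne.symm hx'.1, Or.inl ⟨haB.1, hxB⟩⟩
      have hbx : s(b, x) ∈ p.edges := by
        by_contra hcon
        refine hchordless ⟨b, x, ?_, p.snd_mem_support_of_mem_edges he, hx, hcon⟩
        simp only [GHat, sup_adj, fromRel_adj]
        exact Or.inr ⟨Ne.symm hx'.2, Or.inl ⟨haB.2, hxB⟩⟩
      have := triangle' p hc he hax hbx
      omega
    have huniq : ∀ e' ∈ p.edges, e' ∉ G.edgeSet → e' = s(a, b) := by
      intro e'
      induction e' using Sym2.ind with
      | _ c d =>
      intro he' he'G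
      have hGH' : (GHat G B).Adj c d := (GHat G B).mem_edgeSet.mp (p.edges_subset_edgeSet he')
      have hncd : c ≠ d := hGH'.ne
      have hcdB : c ∈ B ∧ d ∈ B := by
        have h := hGH'
        simp only [GHat, sup_adj, fromRel_adj] at h
        rcases h with h | ⟨-, h | h⟩
        · exact absurd (G.mem_edgeSet.mpr h) he'G
        · exact h
        · exact ⟨h.2, h.1⟩
      rcases hsupB c (p.fst_mem_support_of_mem_edges he') hcdB.1 with rfl | rfl <;>
        rcases hsupB d (p.snd_mem_support_of_mem_edges he') hcdB.2 with rfl | rfl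
      · exact absurd rfl hncd
      · rfl
      · exact Sym2.eq_swap
      · exact absurd rfl hncd
    refine ⟨s(a, b), he, heG, huniq, ?_⟩
    have ha : a ∈ p.support := p.fst_mem_support_of_mem_edges he
    have hmem : ∀ f, f ∈ (p.rotate a ha).edges ↔ f ∈ p.edges :=
      fun f => (p.rotate_edges a ha).mem_iff
    obtain ⟨qh, hqp, hqnab, hqiff, hqlen, hqsup⟩ :=
      cycleDecomp' (p.rotate a ha) (hc.rotate ha) ((hmem _).mpr he)
    have hqG : ∀ f ∈ qh.edges, f ∈ G.edgeSet := by
      intro f hf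
      by_contra hfG
      have hfp : f ∈ p.edges := (hmem f).mp ((hqiff f).mpr (Or.inr hf))
      exact hqnab (huniq f hfp hfG ▸ hf)
    have hsup : ∀ x ∈ qh.support, x ∈ p.support := by
      intro x hx
      rcases mem_support_cases' (p.rotate a ha) x (hqsup x hx) with rfl | ⟨f, hf, hxf⟩
      · exact ha
      · exact mem_support_of_mem_edge' p ((hmem f).mp hf) hxf
    refine ⟨b, a, qh.transfer G hqG, ⟨hqp.transfer hqG, haB.2, haB.1, hnab.symm, ?_⟩, ?_, ?_, ?_⟩
    · intro x hxq hxB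
      rw [Walk.support_transfer] at hxq
      rcases hsupB x (hsup x hxq) hxB with rfl | rfl
      · exact Or.inr rfl
      · exact Or.inl rfl
    · have hlenrot : (p.rotate a ha).length = p.length := by
        have := (p.rotate_edges a ha).perm.length_eq
        rwa [Walk.length_edges, Walk.length_edges] at this
      rw [Walk.length_transfer]
      omega
    · intro x
      rw [Walk.edges_transfer]
      constructor
      · intro hx
        refine ⟨(hmem x).mp ((hqiff x).mpr (Or.inr hx)), ?_⟩
        rintro rfl
        exact hqnab hx
      · rintro ⟨hxp, hxne⟩
        rcases (hqiff x).mp ((hmem x).mpr hxp) with rfl | hx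
        · exact absurd rfl hxne
        · exact hx
    · rintro ⟨x, y, hxy, hx, hy, hne⟩
      rw [Walk.support_transfer] at hx hy
      rw [Walk.edges_transfer] at hne
      have hadj : (GHat G B).Adj x y := by
        simp only [GHat, sup_adj]
        exact Or.inl hxy
      have hmemp : s(x, y) ∈ p.edges := by
        by_contra hcon
        exact hchordless ⟨x, y, hadj, hsup x hx, hsup y hy, hcon⟩
      rcases (hqiff _).mp ((hmem _).mpr hmemp) with heq | hmm
      · exact heG (heq ▸ G.mem_edgeSet.mpr hxy)
      · exact hne hmm
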